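/- Let 1 < p ≤ 2. Then for all vectors ξ, η ∈ ℝ^N, not both zero, one has (p−1)·2^{(p−1)(p−2)/p} |ξ − η|^2 ≤ [(|ξ|^{p−2}ξ − |η|^{p−2}η) · (ξ − η)] · (|ξ|^p + |η|^p)^{(2−p)/p}. -/

import Mathlib

open scoped RealInnerProductSpace

private lemma simon_aux1 (a b p : ℝ) (ha : 0 ≤ a) (hb : 0 ≤ b) (hp : 1 ≤ p) :
    (a+b)^p ≤ 2^(p-1) * (a^p + b^p) := by
  lift a to NNReal using ha
  lift b to NNReal using hb
  have := NNReal.rpow_add_le_mul_rpow_add_rpow a b hp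
  exact_mod_cast this

private lemma simon_aux2 (a b q : ℝ) (ha : 0 ≤ a) (hb : 0 ≤ b) (hq0 : 0 ≤ q) (hq1 : q ≤ 1) :
    (a+b)^q ≤ a^q + b^q := by
  lift a to NNReal using ha
  lift b to NNReal using hb
  exact_mod_cast NNReal.rpow_add_le_add_rpow a b hq0 hq1

private lemma rpow_sub_ge {a b q : ℝ} (hb : 0 ≤ b) (hba : b ≤ a) (hq0 : 0 < q) (hq1 : q ≤ 1) :
    q * (a - b) * (a + b) ^ (q - 1) ≤ a ^ q - b ^ q := by
  have ha : 0 ≤ a := hb.trans hba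
  rcases (add_nonneg ha hb).eq_or_lt with h0 | h0
  · have ha0 : a = 0 := by linarith
    have hb0 : b = 0 := by linarith
    subst ha0; subst hb0
    simp
  · set c := a + b with hc
    have hmono : MonotoneOn (fun x : ℝ => x ^ q - q * c ^ (q - 1) * x) (Set.Icc 0 c) := by
      apply monotoneOn_of_deriv_nonneg (convex_Icc 0 c)
      · apply ContinuousOn.sub
        · exact fun x _ => (Real.continuousAt_rpow_const x q (Or.inr hq0.le)).continuousWithinAt
        · exact (continuous_const.mul continuous_id).continuousOn
      · intro x hx
        rw [interior_Icc] at hx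
        exact ((Real.hasDerivAt_rpow_const (Or.inl hx.1.ne')).sub
          ((hasDerivAt_id x).const_mul _)).differentiableAt.differentiableWithinAt
      · intro x hx
        rw [interior_Icc] at hx
        have hd : HasDerivAt (fun x : ℝ => x ^ q - q * c ^ (q - 1) * x)
            (q * x ^ (q - 1) - q * c ^ (q - 1) * 1) x :=
          (Real.hasDerivAt_rpow_const (Or.inl hx.1.ne')).sub
            ((hasDerivAt_id x).const_mul _)
        rw [hd.deriv]
        have : c ^ (q - 1) ≤ x ^ (q - 1) :=
          Real.rpow_le_rpow_of_nonpos hx.1 hx.2.le (by linarith)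
        nlinarith
    have hmem1 : b ∈ Set.Icc 0 c := ⟨hb, by simp [hc]; linarith⟩
    have hmem2 : a ∈ Set.Icc 0 c := ⟨ha, by simp [hc]; linarith⟩
    have := hmono hmem1 hmem2 hba
    simp only [] at this
    nlinarith [this]

-- step-up identity

private lemma rpow_succ' {a : ℝ} (ha : 0 ≤ a) {r s : ℝ} (hs : s = r + 1) (hr1 : r + 1 ≠ 0) :
    a ^ r * a = a ^ s := by
  rcases ha.eq_or_lt with rfl | ha'
  · rw [hs]; simp [Real.zero_rpow hr1]
  · rw [hs, Real.rpow_add ha', Real.rpow_one]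

-- endpoint I (wlog b ≤ a)
private lemma endI {a b p : ℝ} (hb : 0 ≤ b) (hba : b ≤ a) (hp1 : 1 < p) (hp2 : p ≤ 2) :
    (p-1) * (a-b)^2 * (a+b)^(p-2) ≤ (a^(p-1) - b^(p-1)) * (a-b) := by
  have h := rpow_sub_ge hb hba (q := p-1) (by linarith) (by linarith)
  have h2 := mul_le_mul_of_nonneg_right h (sub_nonneg.mpr hba)
  have : p - 1 - 1 = p - 2 := by ring
  rw [this] at h2
  nlinarith [h2]

-- endpoint II
private lemma endII {a b p : ℝ} (ha : 0 ≤ a) (hb : 0 ≤ b) (hp1 : 1 < p) (hp2 : p ≤ 2) :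
    (p-1) * (a+b)^2 * (a+b)^(p-2) ≤ (a^(p-1) + b^(p-1)) * (a+b) := by
  have hab : 0 ≤ a + b := by linarith
  rcases hab.eq_or_lt with h0 | h0
  · have ha0 : a = 0 := by linarith
    have hb0 : b = 0 := by linarith
    subst ha0; subst hb0; simp
  · have hsub : (a+b)^(p-1) ≤ a^(p-1) + b^(p-1) := simon_aux2 a b (p-1) ha hb (by linarith) (by linarith)
    have hnn : (0:ℝ) ≤ (a+b)^(p-1) := Real.rpow_nonneg hab _
    have hid : (a+b)^2 * (a+b)^(p-2) = (a+b)^(p-1) * (a+b) := by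
      rw [← Real.rpow_natCast (a+b) 2, ← Real.rpow_add h0, ← Real.rpow_add_one h0.ne' (p-1)]
      norm_num
    have hkey : (p-1) * (a+b)^(p-1) ≤ a^(p-1) + b^(p-1) := by nlinarith
    calc (p-1) * (a+b)^2 * (a+b)^(p-2) = (p-1) * ((a+b)^2 * (a+b)^(p-2)) := by ring
      _ = (p-1) * ((a+b)^(p-1) * (a+b)) := by rw [hid]
      _ = ((p-1) * (a+b)^(p-1)) * (a+b) := by ring
      _ ≤ (a^(p-1) + b^(p-1)) * (a+b) := mul_le_mul_of_nonneg_right hkey hab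

private lemma scalar_key {p a b t : ℝ} (hp1 : 1 < p) (hp2 : p ≤ 2) (ha : 0 ≤ a) (hb : 0 ≤ b)
    (ht : |t| ≤ a * b) :
    (p-1) * (a^2 + b^2 - 2*t) * (a+b)^(p-2) ≤ (a^p + b^p) - (a^(p-2) + b^(p-2)) * t := by
  have e1 : a^(p-2) * a = a^(p-1) := rpow_succ' ha (by ring) (by linarith)
  have e2 : b^(p-2) * b = b^(p-1) := rpow_succ' hb (by ring) (by linarith)
  have e3 : a^(p-1) * a = a^p := rpow_succ' ha (by ring) (by linarith)
  have e4 : b^(p-1) * b = b^p := rpow_succ' hb (by ring) (by linarith)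
  set c := (a+b)^(p-2) with hc
  have h1 : ((a^(p-2) + b^(p-2)) - 2*(p-1)*c) * (a*b)
      ≤ (a^p + b^p) - (p-1)*(a^2+b^2)*c := by
    rcases le_total b a with hba | hab
    · have h := endI hb hba hp1 hp2
      nlinarith [h, e1, e2, e3, e4]
    · have h := endI ha hab hp1 hp2
      rw [add_comm b a] at h
      nlinarith [h, e1, e2, e3, e4]
  have h2 : -(((a^(p-2) + b^(p-2)) - 2*(p-1)*c) * (a*b))
      ≤ (a^p + b^p) - (p-1)*(a^2+b^2)*c := by
    have h := endII ha hb hp1 hp2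
    nlinarith [h, e1, e2, e3, e4]
  have h3 : ((a^(p-2) + b^(p-2)) - 2*(p-1)*c) * t
      ≤ (a^p + b^p) - (p-1)*(a^2+b^2)*c := by
    calc ((a^(p-2) + b^(p-2)) - 2*(p-1)*c) * t
        ≤ |((a^(p-2) + b^(p-2)) - 2*(p-1)*c) * t| := le_abs_self _
      _ = |(a^(p-2) + b^(p-2)) - 2*(p-1)*c| * |t| := abs_mul _ _
      _ ≤ |(a^(p-2) + b^(p-2)) - 2*(p-1)*c| * (a*b) :=
          mul_le_mul_of_nonneg_left ht (abs_nonneg _)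
      _ = |((a^(p-2) + b^(p-2)) - 2*(p-1)*c) * (a*b)| := by
          rw [abs_mul, abs_of_nonneg (mul_nonneg ha hb)]
      _ ≤ (a^p + b^p) - (p-1)*(a^2+b^2)*c := abs_le.mpr ⟨by linarith, h1⟩
  nlinarith [h3]

/-- Simon's inequality for `1 < p ≤ 2`: for all `ξ, η ∈ ℝ^N`, not both zero,
`(p−1) 2^{(p−1)(p−2)/p} |ξ−η|^2 ≤ [(|ξ|^{p−2}ξ − |η|^{p−2}η) ⬝ (ξ−η)] (|ξ|^p + |η|^p)^{(2−p)/p}`. -/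
theorem simon_inequality_p_le_two (N : ℕ) (p : ℝ) (hp1 : 1 < p) (hp2 : p ≤ 2)
    (ξ η : EuclideanSpace ℝ (Fin N)) (hne : ξ ≠ 0 ∨ η ≠ 0) :
    (p - 1) * (2 : ℝ) ^ ((p - 1) * (p - 2) / p) * ‖ξ - η‖ ^ (2 : ℝ) ≤
      ⟪(‖ξ‖ ^ (p - 2)) • ξ - (‖η‖ ^ (p - 2)) • η, ξ - η⟫ *
        (‖ξ‖ ^ p + ‖η‖ ^ p) ^ ((2 - p) / p) := by
  have ha : (0:ℝ) ≤ ‖ξ‖ := norm_nonneg _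
  have hb : (0:ℝ) ≤ ‖η‖ := norm_nonneg _
  have hp0 : (0:ℝ) < p := by linarith
  have hab : (0:ℝ) < ‖ξ‖ + ‖η‖ := by
    rcases hne with h | h
    · have : (0:ℝ) < ‖ξ‖ := norm_pos_iff.mpr h
      linarith
    · have : (0:ℝ) < ‖η‖ := norm_pos_iff.mpr h
      linarith
  have ht : |⟪ξ, η⟫| ≤ ‖ξ‖ * ‖η‖ := abs_real_inner_le_norm ξ η
  -- inner product expansion
  have e1 : ‖ξ‖^(p-2) * ‖ξ‖^2 = ‖ξ‖^p := by
    rcases ha.eq_or_lt with h | h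
    · rw [← h]; simp [Real.zero_rpow (by linarith : p ≠ 0)]
    · rw [← Real.rpow_natCast ‖ξ‖ 2, ← Real.rpow_add h]; norm_num
  have e2 : ‖η‖^(p-2) * ‖η‖^2 = ‖η‖^p := by
    rcases hb.eq_or_lt with h | h
    · rw [← h]; simp [Real.zero_rpow (by linarith : p ≠ 0)]
    · rw [← Real.rpow_natCast ‖η‖ 2, ← Real.rpow_add h]; norm_num
  have hI : ⟪(‖ξ‖ ^ (p - 2)) • ξ - (‖η‖ ^ (p - 2)) • η, ξ - η⟫
      = (‖ξ‖^p + ‖η‖^p) - (‖ξ‖^(p-2) + ‖η‖^(p-2)) * ⟪ξ, η⟫ := by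
    rw [inner_sub_left, inner_sub_right, inner_sub_right, real_inner_smul_left,
      real_inner_smul_left, real_inner_smul_left, real_inner_smul_left,
      real_inner_self_eq_norm_sq, real_inner_self_eq_norm_sq, real_inner_comm η ξ]
    nlinarith [e1, e2]
  -- norm squared expansion
  have hD : ‖ξ - η‖ ^ (2:ℝ) = ‖ξ‖^2 + ‖η‖^2 - 2*⟪ξ, η⟫ := by
    rw [show (2:ℝ) = ((2:ℕ):ℝ) by norm_num, Real.rpow_natCast, @norm_sub_sq_real]
    ring
  have hS : (0:ℝ) < ‖ξ‖^p + ‖η‖^p := by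
    rcases hne with h | h
    · have h' : (0:ℝ) < ‖ξ‖ := norm_pos_iff.mpr h
      have := Real.rpow_pos_of_pos h' p
      have := Real.rpow_nonneg hb p
      linarith
    · have h' : (0:ℝ) < ‖η‖ := norm_pos_iff.mpr h
      have := Real.rpow_pos_of_pos h' p
      have := Real.rpow_nonneg ha p
      linarith
  -- power mean bound
  have hpm : (2:ℝ) ^ ((p-1)*(p-2)/p) * (‖ξ‖^p + ‖η‖^p) ^ ((p-2)/p) ≤ (‖ξ‖+‖η‖)^(p-2) := by
    have h1 := simon_aux1 ‖ξ‖ ‖η‖ p ha hb hp1.le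
    have hpos : (0:ℝ) < (‖ξ‖+‖η‖)^p := Real.rpow_pos_of_pos hab p
    have hexp : (p-2)/p ≤ 0 := div_nonpos_of_nonpos_of_nonneg (by linarith) hp0.le
    have h2 := Real.rpow_le_rpow_of_nonpos hpos h1 hexp
    have h3 : ((‖ξ‖+‖η‖)^p) ^ ((p-2)/p) = (‖ξ‖+‖η‖)^(p-2) := by
      rw [← Real.rpow_mul hab.le]
      congr 1
      field_simp
    have h4 : ((2:ℝ)^(p-1) * (‖ξ‖^p + ‖η‖^p)) ^ ((p-2)/p)
        = (2:ℝ) ^ ((p-1)*(p-2)/p) * (‖ξ‖^p + ‖η‖^p) ^ ((p-2)/p) := by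
      rw [Real.mul_rpow (by positivity) hS.le, ← Real.rpow_mul (by norm_num), mul_div_assoc]
    rw [h3, h4] at h2
    exact h2
  have hEpos : (0:ℝ) < (‖ξ‖^p + ‖η‖^p) ^ ((2-p)/p) := Real.rpow_pos_of_pos hS _
  have hcancel : (‖ξ‖^p + ‖η‖^p) ^ ((p-2)/p) * (‖ξ‖^p + ‖η‖^p) ^ ((2-p)/p) = 1 := by
    rw [← Real.rpow_add hS]
    have : (p-2)/p + (2-p)/p = 0 := by field_simp; ring
    rw [this, Real.rpow_zero]
  have hCle : (2:ℝ) ^ ((p-1)*(p-2)/p)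
      ≤ (‖ξ‖+‖η‖)^(p-2) * (‖ξ‖^p + ‖η‖^p) ^ ((2-p)/p) := by
    have h5 := mul_le_mul_of_nonneg_right hpm hEpos.le
    calc (2:ℝ) ^ ((p-1)*(p-2)/p)
        = (2:ℝ) ^ ((p-1)*(p-2)/p) *
            ((‖ξ‖^p + ‖η‖^p) ^ ((p-2)/p) * (‖ξ‖^p + ‖η‖^p) ^ ((2-p)/p)) := by
          rw [hcancel, mul_one]
      _ = (2:ℝ) ^ ((p-1)*(p-2)/p) * (‖ξ‖^p + ‖η‖^p) ^ ((p-2)/p)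
            * (‖ξ‖^p + ‖η‖^p) ^ ((2-p)/p) := by ring
      _ ≤ (‖ξ‖+‖η‖)^(p-2) * (‖ξ‖^p + ‖η‖^p) ^ ((2-p)/p) := h5
  have hkey := scalar_key hp1 hp2 ha hb ht
  rw [← hI] at hkey
  have hDnn : (0:ℝ) ≤ ‖ξ‖^2 + ‖η‖^2 - 2*⟪ξ, η⟫ := by
    have h6 : ⟪ξ, η⟫ ≤ ‖ξ‖ * ‖η‖ := (abs_le.mp ht).2
    have h7 := sq_nonneg (‖ξ‖ - ‖η‖)
    clear hkey hI hD hCle hcancel hpm e1 e2 ht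
    nlinarith [h6, h7]
  have hfac : (0:ℝ) ≤ (p-1) * (‖ξ‖^2 + ‖η‖^2 - 2*⟪ξ, η⟫) :=
    mul_nonneg (by linarith) hDnn
  calc (p - 1) * (2:ℝ) ^ ((p-1)*(p-2)/p) * ‖ξ - η‖ ^ (2:ℝ)
      = ((p-1) * (‖ξ‖^2 + ‖η‖^2 - 2*⟪ξ, η⟫)) * (2:ℝ) ^ ((p-1)*(p-2)/p) := by
        rw [hD]; ring
    _ ≤ ((p-1) * (‖ξ‖^2 + ‖η‖^2 - 2*⟪ξ, η⟫)) *
          ((‖ξ‖+‖η‖)^(p-2) * (‖ξ‖^p + ‖η‖^p) ^ ((2-p)/p)) :=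
        mul_le_mul_of_nonneg_left hCle hfac
    _ = ((p-1) * (‖ξ‖^2 + ‖η‖^2 - 2*⟪ξ, η⟫) * (‖ξ‖+‖η‖)^(p-2))
          * (‖ξ‖^p + ‖η‖^p) ^ ((2-p)/p) := by ring
    _ ≤ ⟪(‖ξ‖ ^ (p - 2)) • ξ - (‖η‖ ^ (p - 2)) • η, ξ - η⟫ *
          (‖ξ‖^p + ‖η‖^p) ^ ((2-p)/p) := mul_le_mul_of_nonneg_right hkey hEpos.le
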